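/- Let Ω ⊂ ℝ^N be an unbounded domain and p ∈ [1,∞). Every bounded sequence (v_n) ⊂ L^p(Ω) has a subsequence (v_{k(n)}) such that sup_{E ⊂ Ω, |E| ≤ n} ∫_E min{δ, |v_{k(n)}(x)|^p} dx → 0 as δ → 0, uniformly in n ∈ ℕ. In particular, for any sequence of measurable sets E_n ⊂ Ω with |E_n| ≤ n, the sequence w_n := χ_{E_n} · v_{k(n)} does not spread out in L^p(Ω). -/

import Mathlib

open MeasureTheory Set Filter Metric
open scoped ENNReal NNReal
open Topology

noncomputable def eD (r : ℕ) : ℝ≥0∞ := 2⁻¹ ^ r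
lemma eD_ne_top (r : ℕ) : eD r ≠ ∞ := by simp [eD]
lemma eD_ne_zero (r : ℕ) : eD r ≠ 0 := by simp [eD]
lemma eD_add_self (r : ℕ) : eD (r + 1) + eD (r + 1) = eD r := by
  rw [eD, eD, pow_succ]
  rw [← mul_two, mul_assoc, ENNReal.inv_mul_cancel (by norm_num) (by norm_num), mul_one]
lemma eD_antitone : Antitone eD := fun a b hab =>
  pow_le_pow_of_le_one (by norm_num) (by norm_num) hab
lemma eD_two_mul (r : ℕ) : eD r = 2 * eD (r + 1) := by
  rw [eD, eD, pow_succ, ← mul_assoc, mul_comm (2:ℝ≥0∞), mul_assoc,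
    ENNReal.mul_inv_cancel (by norm_num) (by norm_num), mul_one]
lemma eD_le_one (r : ℕ) : eD r ≤ 1 := by
  simpa [eD] using eD_antitone (Nat.zero_le r)
lemma geo_sum_le : ∀ (R : ℕ) (s : ℕ), ∑ r ∈ Finset.range R, eD (s + r + 1) ≤ eD s := by
  intro R
  induction R with
  | zero => intro s; simp
  | succ R ih =>
    intro s
    rw [Finset.sum_range_succ' (fun r => eD (s + r + 1)) R]
    have h1 : ∑ r ∈ Finset.range R, eD (s + (r + 1) + 1) ≤ eD (s + 1) := by
      refine le_trans (le_of_eq ?_) (ih (s + 1))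
      apply Finset.sum_congr rfl
      intro r _
      ring_nf
    calc ∑ r ∈ Finset.range R, eD (s + (r + 1) + 1) + eD (s + 0 + 1)
        ≤ eD (s + 1) + eD (s + 1) := add_le_add h1 (by norm_num)
      _ = eD s := eD_add_self s

section Est
variable {α : Type*} [MeasurableSpace α] (μ : Measure α) (F : α → ℝ≥0∞)

lemma pointwise_min_le (i : ℕ) : ∀ (J : ℕ) (x : α),
    min (eD i) (F x) ≤
      (∑ j ∈ Finset.range J, ({y | eD (i+j+1) < F y}.indicator (fun _ => eD (i+j+1)) x))
        + eD (i + J) := by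
  intro J
  induction J with
  | zero => intro x; simpa using min_le_left _ _
  | succ J ih =>
    intro x
    rw [Finset.sum_range_succ]
    by_cases h : eD (i + J + 1) < F x
    · have hind : ({y | eD (i+J+1) < F y}.indicator (fun _ => eD (i+J+1)) x) = eD (i+J+1) :=
        Set.indicator_of_mem (show x ∈ {y | eD (i+J+1) < F y} from h) _
      calc min (eD i) (F x)
          ≤ (∑ j ∈ Finset.range J, ({y | eD (i+j+1) < F y}.indicator (fun _ => eD (i+j+1)) x))
            + eD (i + J) := ih x
        _ = (∑ j ∈ Finset.range J, ({y | eD (i+j+1) < F y}.indicator (fun _ => eD (i+j+1)) x))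
            + (eD (i + J + 1) + eD (i + J + 1)) := by rw [eD_add_self]
        _ = ((∑ j ∈ Finset.range J, ({y | eD (i+j+1) < F y}.indicator (fun _ => eD (i+j+1)) x))
            + ({y | eD (i+J+1) < F y}.indicator (fun _ => eD (i+J+1)) x)) + eD (i + (J + 1)) := by
            rw [hind]; rw [show i + (J + 1) = i + J + 1 from rfl]; ring
    · push_neg at h
      calc min (eD i) (F x) ≤ F x := min_le_right _ _
        _ ≤ eD (i + (J+1)) := h
        _ ≤ _ := le_add_self
end Est

section Est2
variable {α : Type*} [MeasurableSpace α] (μ : Measure α) (F : α → ℝ≥0∞)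

lemma main_est (hF : Measurable F) (i J : ℕ) :
    ∫⁻ x, min (eD i) (F x) ∂μ ≤
      (∑ j ∈ Finset.range J, eD (i+j+1) * μ {y | eD (i+j+1) < F y}) + eD (i+J) * μ univ := by
  have hmeas : ∀ r : ℕ, MeasurableSet {y | eD r < F y} := fun r =>
    measurableSet_lt measurable_const hF
  calc ∫⁻ x, min (eD i) (F x) ∂μ
      ≤ ∫⁻ x, ((∑ j ∈ Finset.range J,
          ({y | eD (i+j+1) < F y}.indicator (fun _ => eD (i+j+1)) x)) + eD (i + J)) ∂μ :=
        lintegral_mono (fun x => pointwise_min_le F i J x)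
    _ = (∑ j ∈ Finset.range J, ∫⁻ x, ({y | eD (i+j+1) < F y}.indicator
          (fun _ => eD (i+j+1)) x) ∂μ) + eD (i+J) * μ univ := by
        rw [lintegral_add_right _ measurable_const, lintegral_const,
          lintegral_finset_sum _ (fun j _ => Measurable.indicator measurable_const
            (hmeas (i+j+1)))]
    _ = (∑ j ∈ Finset.range J, eD (i+j+1) * μ {y | eD (i+j+1) < F y}) + eD (i+J) * μ univ := by
        congr 1
        exact Finset.sum_congr rfl fun j _ => lintegral_indicator_const (hmeas (i+j+1)) _

lemma chain_est (hF : Measurable F) : ∀ R : ℕ,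
    (∑ r ∈ Finset.range R, eD (r+1) * μ {y | eD r < F y}) + ∫⁻ x, min (eD R) (F x) ∂μ
      ≤ ∫⁻ x, F x ∂μ := by
  have hmeas : ∀ r : ℕ, MeasurableSet {y | eD r < F y} := fun r =>
    measurableSet_lt measurable_const hF
  have hstep : ∀ r : ℕ,
      eD (r+1) * μ {y | eD r < F y} + ∫⁻ x, min (eD (r+1)) (F x) ∂μ
        ≤ ∫⁻ x, min (eD r) (F x) ∂μ := by
    intro r
    have hpt : ∀ x, ({y | eD r < F y}.indicator (fun _ => eD (r+1)) x) + min (eD (r+1)) (F x)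
        ≤ min (eD r) (F x) := by
      intro x
      by_cases h : eD r < F x
      · rw [Set.indicator_of_mem (show x ∈ {y | eD r < F y} from h)]
        have h1 : min (eD (r+1)) (F x) = eD (r+1) :=
          min_eq_left (le_trans (eD_antitone (Nat.le_succ r)) h.le)
        have h2 : min (eD r) (F x) = eD r := min_eq_left h.le
        rw [h1, h2, eD_add_self]
      · rw [Set.indicator_of_notMem (show x ∉ {y | eD r < F y} from h), zero_add]
        exact min_le_min (eD_antitone (Nat.le_succ r)) le_rfl
    calc eD (r+1) * μ {y | eD r < F y} + ∫⁻ x, min (eD (r+1)) (F x) ∂μ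
        = ∫⁻ x, (({y | eD r < F y}.indicator (fun _ => eD (r+1)) x)
            + min (eD (r+1)) (F x)) ∂μ := by
          rw [lintegral_add_left (Measurable.indicator measurable_const (hmeas r)),
            lintegral_indicator_const (hmeas r)]
      _ ≤ ∫⁻ x, min (eD r) (F x) ∂μ := lintegral_mono hpt
  intro R
  induction R with
  | zero =>
    simpa using lintegral_mono (fun x => min_le_right (eD 0) (F x))
  | succ R ih =>
    rw [Finset.sum_range_succ, add_assoc]
    exact le_trans (add_le_add_right (hstep R) _) ih
end Est2

/-- On an unbounded domain `Ω`, every bounded sequence in `L^p(Ω)` has a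
subsequence `v_{k(n)}` such that `sup_{|E| ≤ n} ∫_E min{δ, |v_{k(n)}|^p} dx → 0` as `δ → 0`,
uniformly in `n`; in particular, for any measurable sets `E_n ⊆ Ω` with `|E_n| ≤ n`, the
sequence `w_n := χ_{E_n} · v_{k(n)}` does not spread out in `L^p(Ω)`. -/
theorem no_spread_subsequence_on_finite_measure_sets {N : ℕ}
    (Ω : Set (EuclideanSpace ℝ (Fin N))) (hΩo : IsOpen Ω) (hΩc : IsConnected Ω)
    (hΩu : ¬ Bornology.IsBounded Ω)
    (p : ℝ) (hp : 1 ≤ p)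
    (v : ℕ → EuclideanSpace ℝ (Fin N) → ℝ)
    (hmeas : ∀ n, AEStronglyMeasurable (v n) (volume.restrict Ω))
    (hint : ∀ n, Integrable (fun x => |v n x| ^ p) (volume.restrict Ω))
    (hbdd : ∃ C : ℝ, ∀ n, ∫ x in Ω, |v n x| ^ p ≤ C) :
    ∃ k : ℕ → ℕ, StrictMono k ∧
      (∀ ε > (0:ℝ), ∃ δ > (0:ℝ), ∀ n : ℕ, ∀ E : Set (EuclideanSpace ℝ (Fin N)),
        E ⊆ Ω → MeasurableSet E → volume E ≤ (n : ℝ≥0∞) →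
        ∫ x in E, min δ (|v (k n) x| ^ p) ≤ ε) ∧
      (∀ E : ℕ → Set (EuclideanSpace ℝ (Fin N)),
        (∀ n, E n ⊆ Ω ∧ MeasurableSet (E n) ∧ volume (E n) ≤ (n : ℝ≥0∞)) →
        ∀ ε > (0:ℝ), ∃ δ > (0:ℝ), ∀ n : ℕ,
          ∫ x in Ω, min δ (|Set.indicator (E n) (v (k n)) x| ^ p) ≤ ε) := by
  classical
  obtain ⟨C, hC⟩ := hbdd
  set μΩ := volume.restrict Ω with hμΩ
  have hΩm : MeasurableSet Ω := hΩo.measurableSet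
  -- measurable representatives
  set g : ℕ → EuclideanSpace ℝ (Fin N) → ℝ := fun m => (hmeas m).mk (v m) with hg
  have hgm : ∀ m, Measurable (g m) := fun m => (hmeas m).measurable_mk
  have hvg : ∀ m, v m =ᵐ[μΩ] g m := fun m => (hmeas m).ae_eq_mk
  set F : ℕ → EuclideanSpace ℝ (Fin N) → ℝ≥0∞ :=
    fun m x => ENNReal.ofReal (|g m x| ^ p) with hF
  have hFm : ∀ m, Measurable (F m) := fun m =>
    (((Real.continuous_rpow_const (by linarith : (0:ℝ) ≤ p)).measurable).comp
      (hgm m).abs).ennreal_ofReal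
  set CE : ℝ≥0∞ := ENNReal.ofReal C with hCE
  have hvg_pow : ∀ m, (fun x => |v m x| ^ p) =ᵐ[μΩ] (fun x => |g m x| ^ p) := fun m =>
    (hvg m).fun_comp (fun t => |t| ^ p)
  have hgint : ∀ m, Integrable (fun x => |g m x| ^ p) μΩ := fun m =>
    (hint m).congr (hvg_pow m)
  have hFC : ∀ m, ∫⁻ x in Ω, F m x ≤ CE := by
    intro m
    rw [hF, hCE]
    rw [← MeasureTheory.ofReal_integral_eq_lintegral_ofReal (hgint m)
      (Eventually.of_forall fun x => Real.rpow_nonneg (abs_nonneg _) p)]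
    apply ENNReal.ofReal_le_ofReal
    calc ∫ x in Ω, |g m x| ^ p = ∫ x in Ω, |v m x| ^ p :=
          (integral_congr_ae (hvg_pow m)).symm
      _ ≤ C := hC m
  -- level densities
  set lam : ℕ → ℕ → ℝ≥0∞ := fun m r => μΩ {y | eD r < F m y} with hlam
  -- subsequence along which lam converges pointwise
  obtain ⟨A, -, φ, hφ, hconvA⟩ :=
    (isCompact_univ (X := ℕ → ℝ≥0∞)).tendsto_subseq (x := lam) (fun m => Set.mem_univ _)
  have hconv : ∀ r, Tendsto (fun l => lam (φ l) r) atTop (𝓝 (A r)) := fun r =>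
    tendsto_pi_nhds.mp hconvA r
  -- partial sums of the A-series are bounded
  have hAsum : ∀ R, ∑ r ∈ Finset.range R, eD (r+1) * A r ≤ CE := by
    intro R
    have hten : Tendsto (fun l => ∑ r ∈ Finset.range R, eD (r+1) * lam (φ l) r) atTop
        (𝓝 (∑ r ∈ Finset.range R, eD (r+1) * A r)) :=
      tendsto_finset_sum _ (fun r _ => ENNReal.Tendsto.const_mul (hconv r)
        (Or.inr (eD_ne_top _)))
    refine le_of_tendsto hten (Eventually.of_forall fun l => ?_)
    calc ∑ r ∈ Finset.range R, eD (r+1) * lam (φ l) r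
        ≤ (∑ r ∈ Finset.range R, eD (r+1) * lam (φ l) r)
            + ∫⁻ x in Ω, min (eD R) (F (φ l) x) ∂volume := self_le_add_right _ _
      _ ≤ ∫⁻ x in Ω, F (φ l) x := chain_est μΩ (F (φ l)) (hFm (φ l)) R
      _ ≤ CE := hFC (φ l)
  set SA : ℕ → ℝ≥0∞ := fun r => eD (r+1) * A r with hSA
  have hSAsum : ∑' r, SA r ≤ CE := ENNReal.tsum_le_of_sum_range_le hAsum
  have hSAne : ∑' r, SA r ≠ ∞ := by
    intro h; rw [h] at hSAsum; exact (lt_of_le_of_lt hSAsum ENNReal.ofReal_lt_top).ne rfl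
  have htail : Tendsto (fun i => ∑' j, SA (j + i)) atTop (𝓝 0) :=
    ENNReal.tendsto_sum_nat_add SA hSAne
  -- choose the final subsequence
  have hP : ∀ n : ℕ, ∀ᶠ l' in atTop, ∀ r ∈ Set.Iic (2*n+2),
      min ((n : ℝ≥0∞)) (lam (φ l') r) ≤ A r + eD (2*n+2) := by
    intro n
    rw [Filter.eventually_all_finite (Set.finite_Iic (2*n+2))]
    intro r _
    by_cases hAr : A r = ⊤
    · filter_upwards with l'
      rw [hAr, top_add]
      exact le_top
    · have hlt : A r < A r + eD (2*n+2) := ENNReal.lt_add_right hAr (eD_ne_zero _)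
      filter_upwards [(hconv r).eventually_lt_const hlt] with l' h
      exact le_trans (min_le_right _ _) h.le
  obtain ⟨l, hl, hlP⟩ := extraction_forall_of_eventually hP
  set k : ℕ → ℕ := φ ∘ l with hk
  -- the key ENNReal-level estimate
  have hkey : ∀ ε : ℝ, 0 < ε → ∃ δ : ℝ, 0 < δ ∧ ∀ n : ℕ,
      ∀ E : Set (EuclideanSpace ℝ (Fin N)), E ⊆ Ω → MeasurableSet E →
      volume E ≤ (n : ℝ≥0∞) →
      (∃ i : ℕ, δ = (2⁻¹ : ℝ) ^ i ∧
        ∫⁻ x in E, min (eD i) (F (k n) x) ≤ ENNReal.ofReal ε) := by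
    intro ε hε
    set εE := ENNReal.ofReal ε with hεEdef
    have hεE0 : 0 < εE := ENNReal.ofReal_pos.mpr hε
    have h8 : (0:ℝ≥0∞) < εE / 8 := ENNReal.div_pos hεE0.ne' (by norm_num)
    obtain ⟨m₀, hm₀⟩ := Filter.eventually_atTop.mp (htail.eventually_lt_const h8)
    have heD0 : Tendsto eD atTop (𝓝 0) :=
      ENNReal.tendsto_pow_atTop_nhds_zero_of_lt_one (by norm_num : (2⁻¹:ℝ≥0∞) < 1)
    obtain ⟨n₁, hn₁⟩ := Filter.eventually_atTop.mp (heD0.eventually_lt_const h8)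
    -- choose i
    have hpoly : Tendsto (fun i : ℕ => eD i * ((n₁ + i : ℕ) : ℝ≥0∞)) atTop (𝓝 0) := by
      have hre : Tendsto (fun i : ℕ => ((n₁ + i : ℕ) : ℝ) * (2⁻¹ : ℝ) ^ i) atTop (𝓝 0) := by
        have hs : Summable (fun i : ℕ => ((n₁ + i : ℕ) : ℝ) * (2⁻¹ : ℝ) ^ i) := by
          have h1 : Summable (fun i : ℕ => (n₁ : ℝ) * (2⁻¹ : ℝ) ^ i) :=
            (summable_geometric_of_lt_one (by norm_num) (by norm_num)).mul_left _
          have h2 : Summable (fun i : ℕ => (i : ℝ) * (2⁻¹ : ℝ) ^ i) := by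
            have := summable_pow_mul_geometric_of_norm_lt_one (R := ℝ) 1
              (r := (2⁻¹ : ℝ)) (by rw [norm_inv]; norm_num)
            simpa using this
          have := h1.add h2
          apply this.congr
          intro i
          push_cast
          ring
        exact hs.tendsto_atTop_zero
      have : Tendsto (fun i : ℕ => ENNReal.ofReal (((n₁ + i : ℕ) : ℝ) * (2⁻¹ : ℝ) ^ i))
          atTop (𝓝 (ENNReal.ofReal 0)) := ENNReal.tendsto_ofReal hre
      rw [ENNReal.ofReal_zero] at this
      apply this.congr
      intro i
      rw [ENNReal.ofReal_mul (by positivity), ENNReal.ofReal_natCast, mul_comm]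
      congr 1
      rw [ENNReal.ofReal_pow (by norm_num), ENNReal.ofReal_inv_of_pos (by norm_num),
        ENNReal.ofReal_ofNat, eD]
    obtain ⟨i, hi_ge, hi_small⟩ : ∃ i : ℕ, m₀ ≤ i ∧
        eD i * ((n₁ + i : ℕ) : ℝ≥0∞) < εE := by
      obtain ⟨i, hi⟩ := Filter.eventually_atTop.mp
        ((hpoly.eventually_lt_const hεE0).and (eventually_ge_atTop m₀))
      exact ⟨i, (hi i le_rfl).2, (hi i le_rfl).1⟩
    refine ⟨(2⁻¹ : ℝ) ^ i, by positivity, ?_⟩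
    intro n E hEsub hEm hEvol
    refine ⟨i, rfl, ?_⟩
    by_cases hn : n < max n₁ i
    · -- small n : use the trivial bound
      calc ∫⁻ x in E, min (eD i) (F (k n) x)
          ≤ ∫⁻ _ in E, eD i := lintegral_mono fun x => min_le_left _ _
        _ = eD i * volume E := by rw [setLIntegral_const]
        _ ≤ eD i * ((n₁ + i : ℕ) : ℝ≥0∞) := by
            apply mul_le_mul_right
            refine le_trans hEvol ?_
            have h' : n ≤ n₁ + i :=
              le_trans hn.le (max_le (Nat.le_add_right n₁ i) (Nat.le_add_left i n₁))
            exact Nat.cast_le.mpr h'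
        _ ≤ εE := hi_small.le
    · push_neg at hn
      have hn₁n : n₁ ≤ n := le_trans (le_max_left _ _) hn
      have hin : i ≤ n := le_trans (le_max_right _ _) hn
      set J := 2*n+2 - i with hJ
      have hiJ : i + J = 2*n+2 := by omega
      set m := k n with hm
      calc ∫⁻ x in E, min (eD i) (F m x)
          ≤ (∑ j ∈ Finset.range J, eD (i+j+1) *
              (volume.restrict E) {y | eD (i+j+1) < F m y}) + eD (i+J) *
              (volume.restrict E) univ :=
            main_est (volume.restrict E) (F m) (hFm m) i J
        _ ≤ (∑ j ∈ Finset.range J, eD (i+j+1) * (A (i+j+1) + eD (2*n+2)))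
              + eD (2*n+2) * (n : ℝ≥0∞) := by
            apply add_le_add
            · apply Finset.sum_le_sum
              intro j hj
              apply mul_le_mul_right
              have hr : i + j + 1 ≤ 2*n+2 := by
                have := Finset.mem_range.mp hj
                omega
              refine le_trans ?_ (hlP n (i+j+1) hr)
              apply le_min
              · refine le_trans (le_trans (measure_mono (subset_univ _)) ?_) hEvol
                rw [Measure.restrict_apply_univ]
              · rw [Measure.restrict_apply' hEm]
                refine le_trans (measure_mono (Set.inter_subset_inter (subset_refl _) hEsub)) ?_
                exact le_of_eq (Measure.restrict_apply' hΩm).symm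
            · rw [hiJ, Measure.restrict_apply_univ]
              exact mul_le_mul_right hEvol _
        _ ≤ (∑ j ∈ Finset.range J, eD (i+j+1) * A (i+j+1))
              + (∑ j ∈ Finset.range J, eD (i+j+1) * eD (2*n+2))
              + eD (2*n+2) * (n : ℝ≥0∞) := by
            rw [← Finset.sum_add_distrib]
            apply add_le_add_left
            apply Finset.sum_le_sum
            intro j _
            rw [mul_add]
        _ ≤ 2 * (∑' j, SA (j + (i+1))) + eD (2*n+2) + eD (n+2) := by
            apply add_le_add
            apply add_le_add
            · -- A-part
              have hterm : ∀ j, eD (i+j+1) * A (i+j+1) = 2 * SA (j + (i+1)) := by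
                intro j
                rw [hSA]
                have hidx : j + (i+1) = i + j + 1 := by omega
                rw [hidx]
                rw [eD_two_mul (i+j+1), mul_assoc]
              calc ∑ j ∈ Finset.range J, eD (i+j+1) * A (i+j+1)
                  = 2 * ∑ j ∈ Finset.range J, SA (j + (i+1)) := by
                    rw [Finset.mul_sum]
                    exact Finset.sum_congr rfl fun j _ => hterm j
                _ ≤ 2 * ∑' j, SA (j + (i+1)) :=
                    mul_le_mul_right (ENNReal.sum_le_tsum _) _
            · -- geometric error part
              calc ∑ j ∈ Finset.range J, eD (i+j+1) * eD (2*n+2)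
                  = (∑ j ∈ Finset.range J, eD (i+j+1)) * eD (2*n+2) := by
                    rw [Finset.sum_mul]
                _ ≤ eD i * eD (2*n+2) := mul_le_mul_left (geo_sum_le J i) _
                _ ≤ 1 * eD (2*n+2) := mul_le_mul_left (eD_le_one i) _
                _ = eD (2*n+2) := one_mul _
            · -- n * eD(2n+2) ≤ eD (n+2)
              have h2n : eD (2*n+2) = eD n * eD (n+2) := by
                rw [eD, eD, eD, ← pow_add]
                congr 1
                omega
              have hcast : (n : ℝ≥0∞) ≤ 2 ^ n := by
                calc (n : ℝ≥0∞) ≤ ((2^n : ℕ) : ℝ≥0∞) :=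
                      Nat.cast_le.mpr (Nat.lt_two_pow_self (n := n)).le
                  _ = 2 ^ n := by push_cast; ring
              have heDn : eD n * 2 ^ n = 1 := by
                rw [eD, ← ENNReal.inv_pow, ENNReal.inv_mul_cancel]
                · exact pow_ne_zero _ (by norm_num)
                · exact ENNReal.pow_ne_top (by norm_num)
              calc eD (2*n+2) * (n : ℝ≥0∞) = eD (n+2) * (eD n * (n : ℝ≥0∞)) := by
                    rw [h2n]; ring
                _ ≤ eD (n+2) * (eD n * 2 ^ n) :=
                    mul_le_mul_right (mul_le_mul_right hcast _) _
                _ = eD (n+2) := by rw [heDn, mul_one]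
        _ ≤ 2 * (εE / 8) + εE / 8 + εE / 8 := by
            apply add_le_add
            apply add_le_add
            · exact mul_le_mul_right (hm₀ (i+1) (by omega)).le _
            · exact le_trans (eD_antitone (by omega : n₁ ≤ 2*n+2)) (hn₁ n₁ le_rfl).le
            · exact le_trans (eD_antitone (by omega : n₁ ≤ n+2)) (hn₁ n₁ le_rfl).le
        _ ≤ εE := by
            have : 2 * (εE / 8) + εE / 8 + εE / 8 = 4 * (εE / 8) := by ring
            rw [this]
            calc (4:ℝ≥0∞) * (εE / 8) ≤ 8 * (εE / 8) := by
                  exact mul_le_mul_left (by norm_num) _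
              _ = εE := by
                  rw [mul_comm, ENNReal.div_mul_cancel (by norm_num) (by norm_num)]
  -- conversion between Bochner and lower integrals
  have hofmin : ∀ (a b : ℝ), 0 ≤ a → 0 ≤ b →
      ENNReal.ofReal (min a b) = min (ENNReal.ofReal a) (ENNReal.ofReal b) := by
    intro a b _ _
    rcases le_total a b with h | h
    · rw [min_eq_left h, min_eq_left (ENNReal.ofReal_le_ofReal h)]
    · rw [min_eq_right h, min_eq_right (ENNReal.ofReal_le_ofReal h)]
  have hofδ : ∀ i : ℕ, ENNReal.ofReal ((2⁻¹:ℝ) ^ i) = eD i := by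
    intro i
    rw [ENNReal.ofReal_pow (by norm_num), ENNReal.ofReal_inv_of_pos (by norm_num),
      ENNReal.ofReal_ofNat, eD]
  have hconvE : ∀ (m : ℕ) (i : ℕ) (E : Set (EuclideanSpace ℝ (Fin N))), E ⊆ Ω →
      MeasurableSet E →
      ∫ x in E, min ((2⁻¹:ℝ)^i) (|v m x| ^ p) =
        (∫⁻ x in E, min (eD i) (F m x)).toReal := by
    intro m i E hEsub hEm
    have hae : v m =ᵐ[volume.restrict E] g m := by
      rw [hμΩ] at hvg
      exact ae_restrict_of_ae_restrict_of_subset hEsub (hvg m)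
    have h1 : ∫ x in E, min ((2⁻¹:ℝ)^i) (|v m x| ^ p)
        = ∫ x in E, min ((2⁻¹:ℝ)^i) (|g m x| ^ p) :=
      integral_congr_ae (hae.fun_comp (fun t => min ((2⁻¹:ℝ)^i) (|t| ^ p)))
    have h0 : 0 ≤ᵐ[volume.restrict E] fun x => min ((2⁻¹:ℝ)^i) (|g m x| ^ p) :=
      Eventually.of_forall fun x => le_min (by positivity) (Real.rpow_nonneg (abs_nonneg _) p)
    have hsm : AEStronglyMeasurable (fun x => min ((2⁻¹:ℝ)^i) (|g m x| ^ p))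
        (volume.restrict E) :=
      (measurable_const.min (((Real.continuous_rpow_const
        (by linarith : (0:ℝ) ≤ p)).measurable).comp (hgm m).abs)).aestronglyMeasurable
    rw [h1, integral_eq_lintegral_of_nonneg_ae h0 hsm]
    congr 1
    apply lintegral_congr
    intro x
    rw [hofmin _ _ (by positivity) (Real.rpow_nonneg (abs_nonneg _) p), hofδ, hF]
  -- assemble
  have hpart1 : ∀ ε > (0:ℝ), ∃ δ > (0:ℝ), ∀ n : ℕ,
      ∀ E : Set (EuclideanSpace ℝ (Fin N)),
      E ⊆ Ω → MeasurableSet E → volume E ≤ (n : ℝ≥0∞) →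
      ∫ x in E, min δ (|v (k n) x| ^ p) ≤ ε := by
    intro ε hε
    obtain ⟨δ, hδ0, hδ⟩ := hkey ε hε
    refine ⟨δ, hδ0, ?_⟩
    intro n E hEsub hEm hEvol
    obtain ⟨i, hδi, hbound⟩ := hδ n E hEsub hEm hEvol
    rw [hδi, hconvE (k n) i E hEsub hEm]
    exact ENNReal.toReal_le_of_le_ofReal hε.le hbound
  refine ⟨k, hφ.comp hl, hpart1, ?_⟩
  intro E hE ε hε
  obtain ⟨δ, hδ0, hδ⟩ := hpart1 ε hε
  refine ⟨δ, hδ0, ?_⟩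
  intro n
  obtain ⟨hEsub, hEm, hEvol⟩ := hE n
  have heq : (fun x => min δ (|Set.indicator (E n) (v (k n)) x| ^ p))
      = Set.indicator (E n) (fun x => min δ (|v (k n) x| ^ p)) := by
    funext x
    by_cases hx : x ∈ E n
    · rw [Set.indicator_of_mem hx, Set.indicator_of_mem hx]
    · rw [Set.indicator_of_notMem hx, Set.indicator_of_notMem hx, abs_zero,
        Real.zero_rpow (by linarith : p ≠ 0), min_eq_right hδ0.le]
  calc ∫ x in Ω, min δ (|Set.indicator (E n) (v (k n)) x| ^ p)
      = ∫ x, Set.indicator (E n) (fun y => min δ (|v (k n) y| ^ p)) x ∂μΩ := by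
        rw [hμΩ]; exact integral_congr_ae (Eventually.of_forall fun x => congrFun heq x)
    _ = ∫ x in E n, min δ (|v (k n) x| ^ p) ∂μΩ := integral_indicator hEm
    _ = ∫ x in E n, min δ (|v (k n) x| ^ p) := by
        rw [hμΩ, Measure.restrict_restrict hEm, Set.inter_eq_self_of_subset_left hEsub]
    _ ≤ ε := hδ n (E n) hEsub hEm hEvol
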